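/- Let C be a finite directed category (finitely many objects and morphisms, with a dimension function into a linear order that strictly increases along every non-identity morphism) and let G be a generating set of morphisms of C (every morphism of C is a finite composite of morphisms of G) satisfying: (i) any two parallel morphisms belonging to G (morphisms in G with the same source and the same target) are equal; and (ii) every span ω ←φ τ →ψ υ with φ, ψ ∈ G can be completed to a commutative square by morphisms ψ* : ω → ς and φ* : υ → ς, each of which is either in G or an identity, with ψ* ∘ φ = φ* ∘ ψ. Then every connected component of C contains exactly one object that is terminal in that component. -/

import Mathlib

open CategoryTheory

universe w v u

variable {C : Type u} [Category.{v} C]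

/-- The morphisms generated by a class `G` of morphisms: the smallest class
containing `G`, the identities, and closed under composition (finite
composites of morphisms of `G`). -/
inductive GeneratedBy (G : MorphismProperty C) : MorphismProperty C
  | of {a b : C} (f : a ⟶ b) : G f → GeneratedBy G f
  | id (a : C) : GeneratedBy G (𝟙 a)
  | comp {a b c : C} (f : a ⟶ b) (g : b ⟶ c) :
      GeneratedBy G f → GeneratedBy G g → GeneratedBy G (f ≫ g)

section Aux

variable {L : Type w} [LinearOrder L]

/-- measure -/
noncomputable def st18Measure [Finite C] (dim : C → L) (a : C) : ℕ :=
  Set.ncard {y : C | dim a < dim y}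

lemma st18Measure_lt [Finite C] (dim : C → L) {a c : C} (h : dim a < dim c) :
    st18Measure dim c < st18Measure dim a := by
  apply Set.ncard_lt_ncard _ (Set.toFinite _)
  rw [Set.ssubset_def]
  constructor
  · intro y hy; exact lt_trans h hy
  · intro habs
    exact absurd (habs (Set.mem_setOf.mpr h)) (lt_irrefl (dim c))

variable {G : MorphismProperty C}

lemma st18_strip
    (hdiamond : ∀ {τ ω υ : C} (φ : τ ⟶ ω) (ψ : τ ⟶ υ), G φ → G ψ →
      ∃ (ς : C) (ψs : ω ⟶ ς) (φs : υ ⟶ ς),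
        (G ψs ∨ ∃ h : ω = ς, ψs = eqToHom h) ∧
        (G φs ∨ ∃ h : υ = ς, φs = eqToHom h) ∧
        φ ≫ ψs = ψ ≫ φs)
    {a b : C} (f : a ⟶ b) (hf : GeneratedBy G f) :
    ∀ {c : C} (ψ : a ⟶ c), G ψ →
      ∃ (d : C) (u : b ⟶ d), (G u ∨ ∃ h : b = d, u = eqToHom h) ∧ Nonempty (c ⟶ d) := by
  induction hf with
  | of f hf =>
    intro c ψ hψ
    obtain ⟨ς, ψs, φs, h1, _h2, _hcomm⟩ := hdiamond f ψ hf hψ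
    exact ⟨ς, ψs, h1, ⟨φs⟩⟩
  | id a =>
    intro c ψ hψ
    exact ⟨c, ψ, Or.inl hψ, ⟨𝟙 c⟩⟩
  | comp f g _ _ ihf ihg =>
    intro c ψ hψ
    obtain ⟨d₁, u₁, hu₁, ⟨v₁⟩⟩ := ihf ψ hψ
    rcases hu₁ with hG | ⟨h, _⟩
    · obtain ⟨d₂, u₂, hu₂, ⟨v₂⟩⟩ := ihg u₁ hG
      exact ⟨d₂, u₂, hu₂, ⟨v₁ ≫ v₂⟩⟩
    · subst h
      exact ⟨_, 𝟙 _, Or.inr ⟨rfl, rfl⟩, ⟨v₁ ≫ g⟩⟩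

lemma st18_conf
    (hgen : ∀ {a b : C} (f : a ⟶ b), GeneratedBy G f)
    (hdiamond : ∀ {τ ω υ : C} (φ : τ ⟶ ω) (ψ : τ ⟶ υ), G φ → G ψ →
      ∃ (ς : C) (ψs : ω ⟶ ς) (φs : υ ⟶ ς),
        (G ψs ∨ ∃ h : ω = ς, ψs = eqToHom h) ∧
        (G φs ∨ ∃ h : υ = ς, φs = eqToHom h) ∧
        φ ≫ ψs = ψ ≫ φs)
    {a c : C} (g : a ⟶ c) :
    ∀ {b : C} (_f : a ⟶ b), ∃ d : C, Nonempty (b ⟶ d) ∧ Nonempty (c ⟶ d) := by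
  induction hgen g with
  | of g hg =>
    intro b f
    obtain ⟨d, u, hu, hv⟩ := st18_strip hdiamond f (hgen f) g hg
    rcases hu with _ | ⟨h, _⟩
    · exact ⟨d, ⟨u⟩, hv⟩
    · exact ⟨d, ⟨u⟩, hv⟩
  | id a =>
    intro b f
    exact ⟨b, ⟨𝟙 b⟩, ⟨f⟩⟩
  | comp g₁ g₂ _ _ ih₁ ih₂ =>
    intro b f
    obtain ⟨d₁, ⟨w₁⟩, ⟨w₂⟩⟩ := ih₁ f
    obtain ⟨d₂, ⟨x₁⟩, ⟨x₂⟩⟩ := ih₂ w₂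
    exact ⟨d₂, ⟨w₁ ≫ x₁⟩, ⟨x₂⟩⟩

lemma st18_cr
    (hgen : ∀ {a b : C} (f : a ⟶ b), GeneratedBy G f)
    (hdiamond : ∀ {τ ω υ : C} (φ : τ ⟶ ω) (ψ : τ ⟶ υ), G φ → G ψ →
      ∃ (ς : C) (ψs : ω ⟶ ς) (φs : υ ⟶ ς),
        (G ψs ∨ ∃ h : ω = ς, ψs = eqToHom h) ∧
        (G φs ∨ ∃ h : υ = ς, φs = eqToHom h) ∧
        φ ≫ ψs = ψ ≫ φs)
    {a b : C} (h : Zigzag a b) :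
    ∃ d : C, Nonempty (a ⟶ d) ∧ Nonempty (b ⟶ d) := by
  induction h with
  | refl => exact ⟨a, ⟨𝟙 a⟩, ⟨𝟙 a⟩⟩
  | tail _ hbc ih =>
    obtain ⟨d, ⟨u⟩, ⟨v⟩⟩ := ih
    rcases hbc with h | h
    · obtain ⟨f⟩ := h
      obtain ⟨e, ⟨p⟩, ⟨q⟩⟩ := st18_conf hgen hdiamond f v
      exact ⟨e, ⟨u ≫ p⟩, ⟨q⟩⟩
    · obtain ⟨f⟩ := h
      exact ⟨d, ⟨u⟩, ⟨f ≫ v⟩⟩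

lemma st18_exists_max [Finite C] (dim : C → L)
    (hdim : ∀ {a b : C} (_f : a ⟶ b), a ≠ b → dim a < dim b)
    (a : C) :
    ∃ t : C, Nonempty (a ⟶ t) ∧ ∀ (x : C) (_f : t ⟶ x), t = x := by
  suffices H : ∀ (n : ℕ) (a : C), st18Measure dim a ≤ n →
      ∃ t : C, Nonempty (a ⟶ t) ∧ ∀ (x : C) (_f : t ⟶ x), t = x from H _ a le_rfl
  intro n
  induction n with
  | zero =>
    intro a ha
    by_cases h : ∀ (x : C) (_f : a ⟶ x), a = x
    · exact ⟨a, ⟨𝟙 a⟩, h⟩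
    · push_neg at h
      obtain ⟨x, f, hne⟩ := h
      have := st18Measure_lt dim (hdim f hne)
      omega
  | succ n ih =>
    intro a ha
    by_cases h : ∀ (x : C) (_f : a ⟶ x), a = x
    · exact ⟨a, ⟨𝟙 a⟩, h⟩
    · push_neg at h
      obtain ⟨x, f, hne⟩ := h
      have hm := st18Measure_lt dim (hdim f hne)
      obtain ⟨t, ⟨g⟩, ht⟩ := ih x (by omega)
      exact ⟨t, ⟨f ≫ g⟩, ht⟩

lemma st18_decomp
    (hdim' : ∀ {a : C} (f : a ⟶ a), f = 𝟙 a)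
    {a b : C} (f : a ⟶ b) (hf : GeneratedBy G f) :
    (∃ h : a = b, f = eqToHom h) ∨
      ∃ (c : C) (φ : a ⟶ c) (f' : c ⟶ b), G φ ∧ a ≠ c ∧ f = φ ≫ f' := by
  induction hf with
  | @of a b f hf =>
    by_cases h : a = b
    · subst h
      exact Or.inl ⟨rfl, by simpa using hdim' f⟩
    · exact Or.inr ⟨b, f, 𝟙 b, hf, h, (Category.comp_id f).symm⟩
  | id a => exact Or.inl ⟨rfl, by simp⟩
  | @comp a m b f g _ _ ihf ihg =>
    rcases ihf with ⟨h, he⟩ | ⟨c, φ, f', hφ, hne, hf'⟩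
    · subst h
      rcases ihg with ⟨h2, he2⟩ | ⟨c, φ, g', hφ, hne, hg'⟩
      · exact Or.inl ⟨h2, by rw [he, he2]; simp⟩
      · exact Or.inr ⟨c, φ, g', hφ, hne, by rw [he, hg']; simp⟩
    · exact Or.inr ⟨c, φ, f' ≫ g, hφ, hne, by rw [hf', Category.assoc]⟩

lemma st18_par_unique [Finite C] (dim : C → L)
    (hdim : ∀ {a b : C} (_f : a ⟶ b), a ≠ b → dim a < dim b)
    (hdim' : ∀ {a : C} (f : a ⟶ a), f = 𝟙 a)
    (hgen : ∀ {a b : C} (f : a ⟶ b), GeneratedBy G f)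
    (hdiamond : ∀ {τ ω υ : C} (φ : τ ⟶ ω) (ψ : τ ⟶ υ), G φ → G ψ →
      ∃ (ς : C) (ψs : ω ⟶ ς) (φs : υ ⟶ ς),
        (G ψs ∨ ∃ h : ω = ς, ψs = eqToHom h) ∧
        (G φs ∨ ∃ h : υ = ς, φs = eqToHom h) ∧
        φ ≫ ψs = ψ ≫ φs) :
    ∀ (n : ℕ) (a : C), st18Measure dim a ≤ n →
      ∀ (b : C), (∀ (x : C) (_f : b ⟶ x), b = x) → ∀ f g : a ⟶ b, f = g := by
  intro n
  induction n with
  | zero =>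
    intro a ha b hb f g
    by_cases hab : a = b
    · subst hab; rw [hdim' f, hdim' g]
    · rcases st18_decomp hdim' f (hgen f) with ⟨h, _⟩ | ⟨c, φ, f', _, hne, _⟩
      · exact absurd h hab
      · have := st18Measure_lt dim (hdim φ hne)
        omega
  | succ n ih =>
    intro a ha b hb f g
    by_cases hab : a = b
    · subst hab; rw [hdim' f, hdim' g]
    · rcases st18_decomp hdim' f (hgen f) with ⟨h, _⟩ | ⟨c, φ, f', hGφ, hac, hf⟩
      · exact absurd h hab
      rcases st18_decomp hdim' g (hgen g) with ⟨h, _⟩ | ⟨d, ψ, g', hGψ, had, hg⟩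
      · exact absurd h hab
      obtain ⟨ς, ψs, φs, _, _, hcomm⟩ := hdiamond φ ψ hGφ hGψ
      -- get a morphism ς ⟶ b
      obtain ⟨e, ⟨p⟩, ⟨q⟩⟩ := st18_conf hgen hdiamond ψs f'
      -- p : b ⟶ e, q : ς ⟶ e
      have heb : b = e := hb e p
      have k : ς ⟶ b := q ≫ eqToHom heb.symm
      have hc : st18Measure dim c ≤ n := by
        have := st18Measure_lt dim (hdim φ hac); omega
      have hd : st18Measure dim d ≤ n := by
        have := st18Measure_lt dim (hdim ψ had); omega
      have h1 : f' = ψs ≫ k := ih c hc b hb f' (ψs ≫ k)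
      have h2 : g' = φs ≫ k := ih d hd b hb g' (φs ≫ k)
      rw [hf, hg, h1, h2, ← Category.assoc, ← Category.assoc, hcomm]

end Aux

/-- Let `C` be a finite directed category (finitely many objects and morphisms,
with a dimension function into a linear order which strictly increases along
non-identity morphisms), and `G` a generating set of morphisms satisfying:
(i) parallel morphisms of `G` are equal, and (ii) every span of morphisms of `G`
can be completed to a commutative square by morphisms each of which belongs to
`G` or is an identity. Then every connected component of `C` contains exactly
one object which is terminal in that component. -/
theorem statement_18 [Finite C] [∀ a b : C, Finite (a ⟶ b)]
    {L : Type w} [LinearOrder L] (dim : C → L)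
    (hdim : ∀ {a b : C} (_f : a ⟶ b), a ≠ b → dim a < dim b)
    (hdim' : ∀ {a : C} (f : a ⟶ a), f = 𝟙 a)
    (G : MorphismProperty C)
    (hgen : ∀ {a b : C} (f : a ⟶ b), GeneratedBy G f)
    (hpar : ∀ {a b : C} (f g : a ⟶ b), G f → G g → f = g)
    (hdiamond : ∀ {τ ω υ : C} (φ : τ ⟶ ω) (ψ : τ ⟶ υ), G φ → G ψ →
      ∃ (ς : C) (ψs : ω ⟶ ς) (φs : υ ⟶ ς),
        (G ψs ∨ ∃ h : ω = ς, ψs = eqToHom h) ∧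
        (G φs ∨ ∃ h : υ = ς, φs = eqToHom h) ∧
        φ ≫ ψs = ψ ≫ φs) :
    ∀ a : C, ∃! t : C, Zigzag a t ∧
      ∀ b : C, Zigzag b t → ∃! _f : b ⟶ t, True := by
  intro a
  obtain ⟨t, ⟨f⟩, hmax⟩ := st18_exists_max dim hdim a
  have hzat : Zigzag a t := Zigzag.of_hom f
  refine ⟨t, ⟨hzat, ?_⟩, ?_⟩
  · intro b hbt
    obtain ⟨d, ⟨u⟩, ⟨v⟩⟩ := st18_cr hgen hdiamond hbt
    have htd : t = d := hmax d v
    refine ⟨u ≫ eqToHom htd.symm, trivial, ?_⟩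
    intro y _
    exact st18_par_unique dim hdim hdim' hgen hdiamond (st18Measure dim b) b le_rfl
      t hmax y (u ≫ eqToHom htd.symm)
  · rintro t' ⟨hzat', hterm'⟩
    have hztt' : Zigzag t t' := (zigzag_symmetric.symm _ _ hzat).trans hzat'
    obtain ⟨u, -, -⟩ := hterm' t hztt'
    exact (hmax t' u).symm
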